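/- If G ⊆ ℝ is a Gδ set containing all rationals, and h : ℝ \ ℚ → ω^ω is a homeomorphism from the irrationals onto Baire space, then there exists f ∈ ω^ω such that for every g ∈ ω^ω with g ≥* f one has h⁻¹(g) ∈ G. -/

import Mathlib

open Set Filter

theorem stmt_12 (G : Set ℝ) (hG : IsGδ G) (hQ : ∀ q : ℚ, (q : ℝ) ∈ G)
    (h : {x : ℝ // Irrational x} ≃ₜ (ℕ → ℕ)) :
    ∃ f : ℕ → ℕ, ∀ g : ℕ → ℕ, (∀ᶠ n in atTop, f n ≤ g n) →
      (h.symm g : ℝ) ∈ G := by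
  classical
  -- Gᶜ is σ-compact in ℝ
  obtain ⟨S, hSopen, hScount, hSeq⟩ := hG
  have hGc : IsSigmaCompact Gᶜ := by
    have : Gᶜ = ⋃₀ (compl '' S) := by
      rw [hSeq, Set.compl_sInter, Set.sUnion_image]
    rw [this]
    refine isSigmaCompact_sUnion _ (hScount.image _) ?_
    rintro ⟨s, ⟨t, ht, rfl⟩⟩
    exact IsSigmaCompact.of_isClosed_subset isSigmaCompact_univ
      (isClosed_compl_iff.mpr (hSopen t ht)) (subset_univ _)
  -- Gᶜ consists of irrationals
  have hGcIrr : Gᶜ ⊆ {x : ℝ | Irrational x} := by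
    intro x hx
    by_contra hxr
    rw [Set.mem_setOf_eq, Irrational, not_not] at hxr
    obtain ⟨q, rfl⟩ := hxr
    exact hx (hQ q)
  -- pull back to the subtype and push to Baire space
  have hA : IsSigmaCompact ((Subtype.val : {x : ℝ // Irrational x} → ℝ) ⁻¹' Gᶜ) := by
    rw [Subtype.isSigmaCompact_iff]
    have : (Subtype.val : {x : ℝ // Irrational x} → ℝ) ''
        (Subtype.val ⁻¹' Gᶜ) = Gᶜ := by
      rw [Set.image_preimage_eq_inter_range]
      exact Set.inter_eq_left.mpr (fun x hx => ⟨⟨x, hGcIrr hx⟩, rfl⟩)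
    rwa [this]
  have hB : IsSigmaCompact (h '' (Subtype.val ⁻¹' Gᶜ)) :=
    hA.image h.continuous
  obtain ⟨K, hKcomp, hKeq⟩ := hB
  -- bounds for each compact
  have hbdd : ∀ i n, BddAbove ((fun g : ℕ → ℕ => g n) '' K i) := by
    intro i n
    have : IsCompact ((fun g : ℕ → ℕ => g n) '' K i) :=
      (hKcomp i).image (continuous_apply n)
    exact this.finite_of_discrete.bddAbove
  set b : ℕ → ℕ → ℕ := fun i n => sSup ((fun g : ℕ → ℕ => g n) '' K i) with hb
  have hble : ∀ i n, ∀ g ∈ K i, g n ≤ b i n := fun i n g hg =>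
    le_csSup (hbdd i n) ⟨g, hg, rfl⟩
  refine ⟨fun n => (Finset.range (n + 1)).sup (fun i => b i n) + 1, ?_⟩
  intro g hg
  by_contra hgG
  -- h.symm g lies in the image, hence in some K i
  have hmem : g ∈ ⋃ i, K i := by
    rw [hKeq]
    exact ⟨h.symm g, hgG, h.apply_symm_apply g⟩
  obtain ⟨i, hi⟩ := Set.mem_iUnion.mp hmem
  obtain ⟨N, hN⟩ := eventually_atTop.mp hg
  have hn : i < max i N + 1 := lt_of_le_of_lt (le_max_left i N) (Nat.lt_succ_self _)
  have h1 : g (max i N) ≤ b i (max i N) := hble i _ g hi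
  have h2 : b i (max i N) ≤ (Finset.range (max i N + 1)).sup (fun j => b j (max i N)) :=
    Finset.le_sup (f := fun j => b j (max i N)) (Finset.mem_range.mpr hn)
  have h3 : (Finset.range (max i N + 1)).sup (fun j => b j (max i N)) + 1 ≤ g (max i N) :=
    hN (max i N) (le_max_right i N)
  omega
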